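/- Let h : ℝ → ℝ be a nonnegative even Schwartz function with ∫ h = 1, and let L = L(T) satisfy 1 ≤ L ≤ T^{1/2} for T ≥ 1. Define h_T(r) = (1/2)h((r−T)/L) + (1/2)h((r+T)/L). Then ∫_{−∞}^{∞} r·tanh(r)·h_T(r) dr = L·T + O(L²·T^{-1/2} + 1) as T → ∞ (in particular it equals L·T + O(1) under the additional hypothesis L = o(T^{1/8}) using ∫ r h(r) dr = 0). -/

import Mathlib

open MeasureTheory

private lemma tanh_eq' (x : ℝ) :
    Real.tanh x = (Real.exp x - Real.exp (-x)) / (Real.exp x + Real.exp (-x)) := by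
  rw [Real.tanh_eq_sinh_div_cosh, Real.sinh_eq, Real.cosh_eq]
  have hd : Real.exp x + Real.exp (-x) ≠ 0 := by positivity
  field_simp

private lemma continuous_tanh' : Continuous Real.tanh := by
  have : Real.tanh = fun x => Real.sinh x / Real.cosh x := by
    funext x; exact Real.tanh_eq_sinh_div_cosh x
  rw [this]
  exact Real.continuous_sinh.div Real.continuous_cosh fun x => (Real.cosh_pos x).ne'

private lemma abs_tanh_le_one' (x : ℝ) : |Real.tanh x| ≤ 1 := by
  rw [tanh_eq', abs_div, abs_of_pos (by positivity : (0:ℝ) < Real.exp x + Real.exp (-x)),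
    div_le_one (by positivity)]
  have h1 := Real.exp_pos x
  have h2 := Real.exp_pos (-x)
  rw [abs_le]
  constructor <;> linarith

private lemma mul_one_sub_tanh_le (x : ℝ) (hx : 0 ≤ x) :
    x * (1 - Real.tanh x) ≤ Real.exp (-x) := by
  have ha := Real.exp_pos x
  have hb := Real.exp_pos (-x)
  have hab : Real.exp x * Real.exp (-x) = 1 := by
    rw [← Real.exp_add]; simp
  have h2x : 2 * x ≤ Real.exp x := by
    have h1 := Real.add_one_le_exp (x / 2)
    have h2 : Real.exp (x / 2) * Real.exp (x / 2) = Real.exp x := by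
      rw [← Real.exp_add]; ring_nf
    nlinarith [sq_nonneg (x / 2 - 1)]
  have hden : (0:ℝ) < Real.exp x + Real.exp (-x) := by positivity
  have key : x * (1 - Real.tanh x) = (2 * x * Real.exp (-x)) / (Real.exp x + Real.exp (-x)) := by
    rw [tanh_eq']; field_simp; ring
  rw [key, div_le_iff₀ hden]
  nlinarith [mul_le_mul_of_nonneg_right h2x hb.le]

set_option maxHeartbeats 2000000 in
theorem stmt4 (h : SchwartzMap ℝ ℝ) (hpos : ∀ x, 0 ≤ h x)
    (heven : ∀ x, h (-x) = h x) (hint : ∫ x : ℝ, h x = 1) :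
    ∃ C : ℝ, ∀ T L : ℝ, 1 ≤ T → 1 ≤ L → L ≤ T ^ ((1:ℝ)/2) →
      |(∫ r : ℝ, r * Real.tanh r *
          ((1/2) * h ((r - T) / L) + (1/2) * h ((r + T) / L))) - L * T|
        ≤ C * (L ^ 2 * T ^ (-(1:ℝ)/2) + 1) := by
  set M : ℝ := ∫ x : ℝ, ‖x‖ ^ 6 * ‖h x‖ with hMdef
  have hM0 : 0 ≤ M := integral_nonneg fun x => by positivity
  refine ⟨1 + 192 * M, ?_⟩
  intro T L hT hL hLT
  have hT0 : (0:ℝ) < T := by linarith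
  have hL0 : (0:ℝ) < L := by linarith
  have hL2T : L ^ 2 ≤ T := by
    calc L ^ 2 ≤ (T ^ ((1:ℝ)/2)) ^ 2 := by
          apply pow_le_pow_left₀ (by linarith) hLT
      _ = T := by
          rw [← Real.rpow_natCast (T ^ ((1:ℝ)/2)) 2, ← Real.rpow_mul hT0.le]
          norm_num
  have hLleT : L ≤ T := le_trans (by nlinarith) hL2T
  set F : ℝ → ℝ := fun u => (T + L * u) * Real.tanh (T + L * u) * h u with hFdef
  set F2 : ℝ → ℝ := fun u => (L * u - T) * Real.tanh (L * u - T) * h u with hF2def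
  set A : ℝ → ℝ := fun u => (T + L * u) * h u with hAdef
  have hconth : Continuous h := h.continuous
  have habs : ∀ u : ℝ, |h u| = h u := fun u => abs_of_nonneg (hpos u)
  -- integrability facts
  have hIh : Integrable (fun u : ℝ => h u) := h.integrable
  have hI1 : Integrable (fun u : ℝ => ‖u‖ ^ 1 * ‖h u‖) := h.integrable_pow_mul volume 1
  have hI6 : Integrable (fun u : ℝ => ‖u‖ ^ 6 * ‖h u‖) := h.integrable_pow_mul volume 6
  have hmul_int : Integrable (fun u : ℝ => u * h u) := by
    refine hI1.mono' (continuous_id.mul hconth).aestronglyMeasurable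
      (Filter.Eventually.of_forall fun u => ?_)
    simp [Real.norm_eq_abs, abs_mul]
  have hF_int : Integrable F := by
    refine ((hIh.const_mul T).add (hI1.const_mul L)).mono'
      ?_ (Filter.Eventually.of_forall fun u => ?_)
    · exact (((continuous_const.add (continuous_const.mul continuous_id)).mul
        (continuous_tanh'.comp (continuous_const.add
          (continuous_const.mul continuous_id)))).mul hconth).aestronglyMeasurable
    · show ‖(T + L * u) * Real.tanh (T + L * u) * h u‖ ≤ _
      simp only [Pi.add_apply]
      rw [Real.norm_eq_abs, abs_mul, abs_mul, habs u]
      have h1 : |T + L * u| ≤ T + L * |u| := by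
        calc |T + L * u| ≤ |T| + |L * u| := abs_add_le _ _
          _ = T + L * |u| := by rw [abs_of_pos hT0, abs_mul, abs_of_pos hL0]
      have h2 := abs_tanh_le_one' (T + L * u)
      have h3 := abs_nonneg (T + L * u)
      have h4 := hpos u
      have h5 := abs_nonneg (Real.tanh (T + L * u))
      simp only [pow_one, Real.norm_eq_abs, habs u]
      have hXY : |T + L * u| * |Real.tanh (T + L * u)| ≤ T + L * |u| :=
        le_trans (mul_le_of_le_one_right h3 h2) h1
      nlinarith [mul_le_mul_of_nonneg_right hXY h4]
  have hF2_eq : F2 = fun u => F (-u) := by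
    funext u
    simp only [hFdef, hF2def, heven u]
    have : Real.tanh (T + L * -u) = - Real.tanh (L * u - T) := by
      rw [show T + L * -u = -(L * u - T) by ring, Real.tanh_neg]
    rw [this]
    ring
  have hF2_int : Integrable F2 := by
    rw [hF2_eq]; exact hF_int.comp_neg
  have hA_eq : A = fun u => T * h u + L * (u * h u) := by
    funext u; simp only [hAdef]; ring
  have hA_int : Integrable A := by
    rw [hA_eq]; exact (hIh.const_mul T).add (hmul_int.const_mul L)
  have hG_int : Integrable (fun u => F u - A u) := hF_int.sub hA_int
  -- value of ∫ A
  have hodd : (∫ u : ℝ, u * h u) = 0 := by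
    have hneg := integral_neg_eq_self (fun u : ℝ => u * h u) (volume : Measure ℝ)
    simp only [heven] at hneg
    have h1 : (∫ u : ℝ, -u * h u) = -∫ u : ℝ, u * h u := by
      rw [← integral_neg]; congr 1; funext u; ring
    rw [h1] at hneg
    linarith
  have hA_val : (∫ u, A u) = T := by
    rw [hA_eq, integral_add (hIh.const_mul T) (hmul_int.const_mul L),
      integral_const_mul, integral_const_mul, hint, hodd]
    ring
  -- substitution: the original integral equals L * ∫ F
  have hsub1 : (∫ r : ℝ, F ((r - T) / L)) = L * ∫ u, F u := by
    rw [show (fun r : ℝ => F ((r - T) / L)) = fun r : ℝ => (fun x : ℝ => F (x / L)) (r - T)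
      from rfl]
    rw [integral_sub_right_eq_self (fun x : ℝ => F (x / L)) T,
      MeasureTheory.Measure.integral_comp_div F L, smul_eq_mul, abs_of_pos hL0]
  have hsub2 : (∫ r : ℝ, F2 ((r + T) / L)) = L * ∫ u, F2 u := by
    rw [show (fun r : ℝ => F2 ((r + T) / L)) = fun r : ℝ => (fun x : ℝ => F2 (x / L)) (r + T)
      from rfl]
    rw [integral_add_right_eq_self (fun x : ℝ => F2 (x / L)) T,
      MeasureTheory.Measure.integral_comp_div F2 L, smul_eq_mul, abs_of_pos hL0]
  have hF2F : (∫ u, F2 u) = ∫ u, F u := by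
    rw [hF2_eq]
    exact integral_neg_eq_self F volume
  have hF0_int : Integrable (fun r : ℝ => F ((r - T) / L)) :=
    (hF_int.comp_div hL0.ne').comp_sub_right T
  have hG0_int : Integrable (fun r : ℝ => F2 ((r + T) / L)) :=
    (hF2_int.comp_div hL0.ne').comp_add_right T
  have hmain : (∫ r : ℝ, r * Real.tanh r *
      ((1/2) * h ((r - T) / L) + (1/2) * h ((r + T) / L))) = L * ∫ u, F u := by
    have heq : (fun r : ℝ => r * Real.tanh r *
        ((1/2) * h ((r - T) / L) + (1/2) * h ((r + T) / L)))
        = fun r : ℝ => (1/2) * F ((r - T) / L) + (1/2) * F2 ((r + T) / L) := by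
      funext r
      have e1 : T + L * ((r - T) / L) = r := by field_simp; ring
      have e2 : L * ((r + T) / L) - T = r := by field_simp; ring
      simp only [hFdef, hF2def, e1, e2]
      ring
    rw [heq, integral_add (hF0_int.const_mul _) (hG0_int.const_mul _),
      integral_const_mul, integral_const_mul, hsub1, hsub2, hF2F]
    ring
  -- split off the main term
  have hF_val : (∫ u, F u) = T + ∫ u, (F u - A u) := by
    have h1 : (∫ u, F u) = ∫ u, (A u + (F u - A u)) := by
      congr 1; funext u; ring
    rw [h1, integral_add hA_int hG_int, hA_val]
  -- pointwise bound on the error integrand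
  set B : ℝ → ℝ := fun u => Real.exp (-(T/2)) * h u + (192 * L^6 / T^5) * (‖u‖^6 * ‖h u‖)
    with hBdef
  have hB_int : Integrable B := (hIh.const_mul _).add (hI6.const_mul _)
  have hGB : ∀ u : ℝ, ‖F u - A u‖ ≤ B u := by
    intro u
    have hx : F u - A u = (T + L * u) * (Real.tanh (T + L * u) - 1) * h u := by
      simp only [hFdef, hAdef]; ring
    rw [hx, Real.norm_eq_abs, abs_mul, abs_mul, habs u]
    have hterm2 : 0 ≤ (192 * L^6 / T^5) * (‖u‖^6 * ‖h u‖) := by positivity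
    set x := T + L * u with hxdef
    by_cases hcase : -(T/2) ≤ L * u
    · have hx2 : T/2 ≤ x := by simp only [hxdef]; linarith
      have hx0 : (0:ℝ) < x := by linarith
      have htanh1 : Real.tanh x ≤ 1 := (abs_le.1 (abs_tanh_le_one' x)).2
      have habs2 : |x| * |Real.tanh x - 1| = x * (1 - Real.tanh x) := by
        rw [abs_of_pos hx0, abs_of_nonpos (by linarith : Real.tanh x - 1 ≤ 0)]
        ring
      rw [habs2]
      have h1 : x * (1 - Real.tanh x) ≤ Real.exp (-x) := mul_one_sub_tanh_le x hx0.le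
      have h2 : Real.exp (-x) ≤ Real.exp (-(T/2)) := Real.exp_le_exp.2 (by linarith)
      have h3 : x * (1 - Real.tanh x) * h u ≤ Real.exp (-(T/2)) * h u :=
        mul_le_mul_of_nonneg_right (h1.trans h2) (hpos u)
      simp only [hBdef]
      linarith
    · push_neg at hcase
      have habsu : T ≤ 2 * L * |u| := by
        have h3 : -u ≤ |u| := neg_le_abs u
        nlinarith
      have h1 : |x| ≤ 3 * (L * |u|) := by
        have h1a : |x| ≤ |T| + |L * u| := abs_add_le _ _
        rw [abs_of_pos hT0, abs_mul, abs_of_pos hL0] at h1a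
        nlinarith [abs_nonneg u]
      have h2 : |Real.tanh x - 1| ≤ 2 := by
        have h2a := abs_le.1 (abs_tanh_le_one' x)
        rw [abs_le]
        constructor <;> [linarith [h2a.1]; linarith [h2a.2]]
      have h6 : |x| * |Real.tanh x - 1| * h u ≤ 6 * (L * |u|) * h u := by
        have h12 : |x| * |Real.tanh x - 1| ≤ 6 * (L * |u|) := by
          calc |x| * |Real.tanh x - 1| ≤ (3 * (L * |u|)) * 2 :=
                mul_le_mul h1 h2 (abs_nonneg _) (by positivity)
            _ = 6 * (L * |u|) := by ring
        exact mul_le_mul_of_nonneg_right h12 (hpos u)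
      have h5 : T^5 ≤ 32 * L^5 * |u|^5 := by
        calc T^5 ≤ (2*L*|u|)^5 := pow_le_pow_left₀ hT0.le habsu 5
          _ = 32 * L^5 * |u|^5 := by ring
      have key : 6 * (L * |u|) * h u ≤ (192 * L^6 / T^5) * (|u|^6 * h u) := by
        rw [div_mul_eq_mul_div, le_div_iff₀ (by positivity : (0:ℝ) < T^5)]
        have hnn : (0:ℝ) ≤ 6 * (L * |u|) * h u := mul_nonneg (by positivity) (hpos u)
        calc 6 * (L * |u|) * h u * T^5
            ≤ 6 * (L * |u|) * h u * (32 * L^5 * |u|^5) := mul_le_mul_of_nonneg_left h5 hnn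
          _ = 192 * L^6 * (|u|^6 * h u) := by ring
      have hexp0 : 0 ≤ Real.exp (-(T/2)) * h u := mul_nonneg (Real.exp_pos _).le (hpos u)
      simp only [hBdef, Real.norm_eq_abs, habs u]
      calc |x| * |Real.tanh x - 1| * h u ≤ 6 * (L * |u|) * h u := h6
        _ ≤ (192 * L^6 / T^5) * (|u|^6 * h u) := key
        _ ≤ Real.exp (-(T/2)) * h u + (192 * L^6 / T^5) * (|u|^6 * h u) := by linarith
  -- bound the error integral
  have hBval : (∫ u, B u) = Real.exp (-(T/2)) + (192 * L^6 / T^5) * M := by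
    simp only [hBdef]
    rw [integral_add (hIh.const_mul _) (hI6.const_mul _),
      integral_const_mul, integral_const_mul, hint, ← hMdef]
    ring
  have hGbound : |∫ u, (F u - A u)| ≤ Real.exp (-(T/2)) + (192 * L^6 / T^5) * M := by
    have h1 : ‖∫ u, (F u - A u)‖ ≤ ∫ u, ‖F u - A u‖ :=
      norm_integral_le_integral_norm _
    rw [Real.norm_eq_abs] at h1
    calc |∫ u, (F u - A u)| ≤ ∫ u, ‖F u - A u‖ := h1
      _ ≤ ∫ u, B u := integral_mono hG_int.norm hB_int hGB
      _ = _ := hBval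
  -- numeric bounds
  have hexpT : L * Real.exp (-(T/2)) ≤ 1 := by
    have hTexp : T ≤ Real.exp (T/2) := by
      have h1 := Real.add_one_le_exp (T/4)
      have h2 : Real.exp (T/4) * Real.exp (T/4) = Real.exp (T/2) := by
        rw [← Real.exp_add]; ring_nf
      nlinarith [sq_nonneg (T/4 - 1), Real.exp_pos (T/4)]
    calc L * Real.exp (-(T/2)) ≤ T * Real.exp (-(T/2)) :=
          mul_le_mul_of_nonneg_right hLleT (Real.exp_pos _).le
      _ ≤ Real.exp (T/2) * Real.exp (-(T/2)) :=
          mul_le_mul_of_nonneg_right hTexp (Real.exp_pos _).le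
      _ = 1 := by rw [← Real.exp_add]; ring_nf; exact Real.exp_zero
  have hL7T : L^7 ≤ T^5 := by
    have h1 : L^7 ≤ L^8 := pow_le_pow_right₀ (by linarith) (by norm_num)
    have h2 : (L^2)^4 ≤ T^4 := pow_le_pow_left₀ (by positivity) hL2T 4
    have h3 : T^4 ≤ T^5 := pow_le_pow_right₀ (by linarith) (by norm_num)
    calc L^7 ≤ L^8 := h1
      _ = (L^2)^4 := by ring
      _ ≤ T^4 := h2
      _ ≤ T^5 := h3
  have hL7 : L * ((192 * L^6 / T^5) * M) ≤ 192 * M := by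
    have he : L * ((192 * L^6 / T^5) * M) = 192 * M * (L^7 / T^5) := by ring
    rw [he]
    have hd : L^7 / T^5 ≤ 1 := (div_le_one (by positivity)).2 hL7T
    nlinarith [hM0]
  -- final assembly
  rw [hmain, hF_val]
  have hfin : |L * (T + ∫ u, (F u - A u)) - L * T| ≤ 1 + 192 * M := by
    have he : L * (T + ∫ u, (F u - A u)) - L * T = L * ∫ u, (F u - A u) := by ring
    rw [he, abs_mul, abs_of_pos hL0]
    calc L * |∫ u, (F u - A u)|
        ≤ L * (Real.exp (-(T/2)) + (192 * L^6 / T^5) * M) :=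
          mul_le_mul_of_nonneg_left hGbound hL0.le
      _ = L * Real.exp (-(T/2)) + L * ((192 * L^6 / T^5) * M) := by ring
      _ ≤ 1 + 192 * M := by linarith
  have hrpow : 0 ≤ L ^ 2 * T ^ (-(1:ℝ)/2) := by positivity
  nlinarith [hM0, hfin]
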